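/- Let n ≥ 1 and 0 ≤ r ≤ n be integers and let f : [0,1] → ℝ be r times continuously differentiable. Then sup_{x∈[0,1]} |(K_n f)^{(r)}(x) − K_{n−r}(f^{(r)})(x)| ≤ (r(r+1)/(2(n+1)))·‖f^{(r)}‖ + ω(f^{(r)}, (r+1)/(n+1)). -/

import Mathlib

/-- Bernstein basis polynomial `p_{n,k}(x) = C(n,k) x^k (1-x)^{n-k}`. -/
noncomputable def bern (n k : ℕ) (x : ℝ) : ℝ :=
  (n.choose k : ℝ) * x ^ k * (1 - x) ^ (n - k)

/-- Kantorovich operator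
`K_n(f;x) = (n+1) Σ_{k=0}^n p_{n,k}(x) ∫_{k/(n+1)}^{(k+1)/(n+1)} f(t) dt`. -/
noncomputable def kantorovichOp (n : ℕ) (f : ℝ → ℝ) (x : ℝ) : ℝ :=
  ((n : ℝ) + 1) * ∑ k ∈ Finset.range (n + 1),
    bern n k x * ∫ t in ((k : ℝ) / ((n : ℝ) + 1))..(((k : ℝ) + 1) / ((n : ℝ) + 1)), f t

/-- Supremum norm on `[0,1]`. -/
noncomputable def supNorm (g : ℝ → ℝ) : ℝ :=
  ⨆ x : Set.Icc (0:ℝ) 1, |g x|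

/-- First modulus of continuity on `[0,1]`. -/
noncomputable def modCont (g : ℝ → ℝ) (δ : ℝ) : ℝ :=
  sSup {d : ℝ | ∃ x ∈ Set.Icc (0:ℝ) 1, ∃ y ∈ Set.Icc (0:ℝ) 1, |x - y| ≤ δ ∧ d = |g x - g y|}

/-! ### auxiliary lemmas -/

lemma bern_nonneg {m k : ℕ} {x : ℝ} (hx : x ∈ Set.Icc (0:ℝ) 1) : 0 ≤ bern m k x := by
  obtain ⟨h0, h1⟩ := hx
  have : (0:ℝ) ≤ 1 - x := by linarith
  exact mul_nonneg (mul_nonneg (by positivity) (by positivity)) (by positivity)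

lemma bern_sum (m : ℕ) (x : ℝ) : ∑ k ∈ Finset.range (m + 1), bern m k x = 1 := by
  have h := add_pow x (1 - x) m
  have h1 : x + (1 - x) = 1 := by ring
  rw [h1, one_pow] at h
  rw [show ∑ k ∈ Finset.range (m + 1), bern m k x
      = ∑ k ∈ Finset.range (m + 1), x ^ k * (1 - x) ^ (m - k) * (m.choose k : ℝ) from
    Finset.sum_congr rfl (fun k _ => by rw [bern]; ring)]
  exact h.symm

lemma one_sub_sum_le_prod (r : ℕ) (x : ℕ → ℝ)
    (hx : ∀ i ∈ Finset.range r, 0 ≤ x i ∧ x i ≤ 1) :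
    1 - ∑ i ∈ Finset.range r, x i ≤ ∏ i ∈ Finset.range r, (1 - x i) := by
  induction r with
  | zero => simp
  | succ r ih =>
    have hx' : ∀ i ∈ Finset.range r, 0 ≤ x i ∧ x i ≤ 1 :=
      fun i hi => hx i (Finset.mem_range.mpr (lt_trans (Finset.mem_range.mp hi) (Nat.lt_succ_self r)))
    have ihr := ih hx'
    have hS : 0 ≤ ∑ i ∈ Finset.range r, x i :=
      Finset.sum_nonneg (fun i hi => (hx' i hi).1)
    have hr0 := (hx r (Finset.mem_range.mpr (Nat.lt_succ_self r))).1
    have hr1 := (hx r (Finset.mem_range.mpr (Nat.lt_succ_self r))).2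
    rw [Finset.sum_range_succ, Finset.prod_range_succ]
    have h1 : (1 - ∑ i ∈ Finset.range r, x i) * (1 - x r)
        ≤ (∏ i ∈ Finset.range r, (1 - x i)) * (1 - x r) :=
      mul_le_mul_of_nonneg_right ihr (by linarith)
    nlinarith [mul_nonneg hS hr0]

lemma gauss_sum (r : ℕ) : ∑ i ∈ Finset.range r, ((i : ℝ) + 1) = r * (r + 1) / 2 := by
  induction r with
  | zero => simp
  | succ r ih =>
    rw [Finset.sum_range_succ, ih]
    push_cast
    ring

/-! ### finite differences -/

noncomputable def fdiff : ℕ → (ℕ → ℝ) → ℕ → ℝ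
  | 0, c => c
  | r + 1, c => fdiff r (fun k => c (k + 1) - c k)

def Dh (h : ℝ) (g : ℝ → ℝ) : ℝ → ℝ := fun t => g (t + h) - g t

lemma Dh_continuous {g : ℝ → ℝ} (hg : Continuous g) (h : ℝ) : Continuous (Dh h g) :=
  (hg.comp (continuous_id.add continuous_const)).sub hg

lemma iterDh_continuous {g : ℝ → ℝ} (hg : Continuous g) (h : ℝ) (r : ℕ) :
    Continuous ((Dh h)^[r] g) := by
  induction r generalizing g with
  | zero => exact hg
  | succ r ih =>
    rw [Function.iterate_succ_apply]
    exact ih (Dh_continuous hg h)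

lemma fdiff_const_mul (r : ℕ) : ∀ (c : ℕ → ℝ) (a : ℝ) (k : ℕ),
    fdiff r (fun j => a * c j) k = a * fdiff r c k := by
  induction r with
  | zero => intro c a k; rfl
  | succ r ih =>
    intro c a k
    show fdiff r (fun j => a * c (j + 1) - a * c j) k = a * fdiff r (fun j => c (j + 1) - c j) k
    rw [show (fun j => a * c (j + 1) - a * c j) = (fun j => a * (c (j + 1) - c j)) by
      funext j; ring]
    exact ih _ a k
lemma hasDerivAt_bern (m k : ℕ) (x : ℝ) :
    HasDerivAt (fun y => bern m k y)
      ((m.choose k : ℝ) * ((k : ℝ) * x ^ (k - 1) * (1 - x) ^ (m - k)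
        - ((m - k : ℕ) : ℝ) * x ^ k * (1 - x) ^ (m - k - 1))) x := by
  have h1 : HasDerivAt (fun y : ℝ => y ^ k) ((k : ℝ) * x ^ (k - 1)) x := hasDerivAt_pow k x
  have h2 : HasDerivAt (fun y : ℝ => (1 - y) ^ (m - k))
      (((m - k : ℕ) : ℝ) * (1 - x) ^ (m - k - 1) * (-1)) x := by
    have hs : HasDerivAt (fun y : ℝ => 1 - y) (-1) x := by
      simpa using (hasDerivAt_id x).const_sub 1
    exact (hasDerivAt_pow (m - k) (1 - x)).comp x hs
  have := (h1.mul h2).const_mul ((m.choose k : ℝ))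
  convert this using 1
  case e'_8 => funext y; simp [bern, mul_assoc]
  case e'_9 => ring
  all_goals rfl

lemma deriv_bern_sum (m : ℕ) (hm : 1 ≤ m) (c : ℕ → ℝ) (x : ℝ) :
    deriv (fun y => ∑ k ∈ Finset.range (m + 1), c k * bern m k y) x
      = (m : ℝ) * ∑ k ∈ Finset.range m, (c (k + 1) - c k) * bern (m - 1) k x := by
  have hterm : ∀ k, HasDerivAt (fun y => c k * bern m k y)
      (c k * ((m.choose k : ℝ) * ((k : ℝ) * x ^ (k - 1) * (1 - x) ^ (m - k)
        - ((m - k : ℕ) : ℝ) * x ^ k * (1 - x) ^ (m - k - 1)))) x :=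
    fun k => (hasDerivAt_bern m k x).const_mul (c k)
  have hsum : HasDerivAt (fun y => ∑ k ∈ Finset.range (m + 1), c k * bern m k y)
      (∑ k ∈ Finset.range (m + 1), c k * ((m.choose k : ℝ) * ((k : ℝ) * x ^ (k - 1) * (1 - x) ^ (m - k)
        - ((m - k : ℕ) : ℝ) * x ^ k * (1 - x) ^ (m - k - 1)))) x :=
    HasDerivAt.fun_sum (fun k _ => hterm k)
  rw [hsum.deriv]
  -- split into A and B parts
  have key : ∀ k ∈ Finset.range (m + 1),
      c k * ((m.choose k : ℝ) * ((k : ℝ) * x ^ (k - 1) * (1 - x) ^ (m - k)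
        - ((m - k : ℕ) : ℝ) * x ^ k * (1 - x) ^ (m - k - 1)))
      = c k * ((m.choose k : ℝ) * (k : ℝ) * x ^ (k - 1) * (1 - x) ^ (m - k))
        - c k * ((m.choose k : ℝ) * ((m - k : ℕ) : ℝ) * x ^ k * (1 - x) ^ (m - k - 1)) := by
    intro k _; ring
  rw [Finset.sum_congr rfl key, Finset.sum_sub_distrib]
  have hA : ∑ k ∈ Finset.range (m + 1),
      c k * ((m.choose k : ℝ) * (k : ℝ) * x ^ (k - 1) * (1 - x) ^ (m - k))
      = ∑ k ∈ Finset.range m, c (k + 1) * ((m : ℝ) * bern (m - 1) k x) := by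
    rw [Finset.sum_range_succ']
    simp only [Nat.cast_zero, mul_zero, zero_mul, mul_zero, add_zero]
    apply Finset.sum_congr rfl
    intro k hk
    have hk' : k < m := Finset.mem_range.mp hk
    have hc : (m.choose (k + 1) : ℝ) * ((k + 1 : ℕ) : ℝ) = (m : ℝ) * ((m - 1).choose k : ℝ) := by
      have := Nat.add_one_mul_choose_eq (m - 1) k
      rw [Nat.sub_add_cancel hm] at this
      exact_mod_cast this.symm
    have he1 : (k + 1) - 1 = k := rfl
    have he2 : m - (k + 1) = (m - 1) - k := by omega
    rw [he1, he2]
    push_cast at hc ⊢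
    rw [bern]
    linear_combination (c (k + 1) * x ^ k * (1 - x) ^ (m - 1 - k)) * hc
  have hB : ∑ k ∈ Finset.range (m + 1),
      c k * ((m.choose k : ℝ) * ((m - k : ℕ) : ℝ) * x ^ k * (1 - x) ^ (m - k - 1))
      = ∑ k ∈ Finset.range m, c k * ((m : ℝ) * bern (m - 1) k x) := by
    rw [Finset.sum_range_succ]
    simp only [Nat.sub_self, Nat.cast_zero, mul_zero, zero_mul, add_zero]
    apply Finset.sum_congr rfl
    intro k hk
    have hk' : k < m := Finset.mem_range.mp hk
    have hc : (m.choose k : ℝ) * ((m - k : ℕ) : ℝ) = (m : ℝ) * ((m - 1).choose k : ℝ) := by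
      have h1 := Nat.choose_succ_right_eq m k
      have h2 := Nat.add_one_mul_choose_eq (m - 1) k
      rw [Nat.sub_add_cancel hm] at h2
      have : m.choose k * (m - k) = m * (m - 1).choose k := h1.symm.trans h2.symm
      exact_mod_cast this
    have he : m - k - 1 = (m - 1) - k := by omega
    rw [he, bern]
    linear_combination (c k * x ^ k * (1 - x) ^ (m - 1 - k)) * hc
  rw [hA, hB, Finset.mul_sum, ← Finset.sum_sub_distrib]
  apply Finset.sum_congr rfl
  intro k _; ring

lemma iteratedDeriv_bern_sum (r : ℕ) : ∀ (m : ℕ), r ≤ m → ∀ (c : ℕ → ℝ),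
    iteratedDeriv r (fun y => ∑ k ∈ Finset.range (m + 1), c k * bern m k y)
      = fun x => (∏ i ∈ Finset.range r, ((m - i : ℕ) : ℝ)) *
          ∑ k ∈ Finset.range (m - r + 1), fdiff r c k * bern (m - r) k x := by
  induction r with
  | zero =>
    intro m _ c
    rw [iteratedDeriv_zero]
    funext x
    simp [fdiff]
  | succ r ih =>
    intro m hrm c
    have hm : 1 ≤ m := le_trans (Nat.succ_le_succ (Nat.zero_le r)) hrm
    rw [iteratedDeriv_succ']
    have hder : deriv (fun y => ∑ k ∈ Finset.range (m + 1), c k * bern m k y)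
        = fun x => ∑ k ∈ Finset.range ((m - 1) + 1),
            ((m : ℝ) * (c (k + 1) - c k)) * bern (m - 1) k x := by
      funext x
      rw [deriv_bern_sum m hm c x, Finset.mul_sum, Nat.sub_add_cancel hm]
      exact Finset.sum_congr rfl (fun k _ => by ring)
    rw [hder, ih (m - 1) (by omega) (fun k => (m : ℝ) * (c (k + 1) - c k))]
    funext x
    have hprod : (∏ i ∈ Finset.range (r + 1), ((m - i : ℕ) : ℝ))
        = (∏ i ∈ Finset.range r, ((m - 1 - i : ℕ) : ℝ)) * (m : ℝ) := by
      rw [Finset.prod_range_succ']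
      simp only [Nat.sub_zero]
      congr 1
      exact Finset.prod_congr rfl (fun i _ => by congr 1; omega)
    rw [hprod]
    have hfd : ∀ k, fdiff r (fun j => (m : ℝ) * (c (j + 1) - c j)) k
        = (m : ℝ) * fdiff (r + 1) c k := fun k => fdiff_const_mul r _ (m : ℝ) k
    have hsub : m - 1 - r = m - (r + 1) := by omega
    rw [hsub]
    rw [Finset.sum_congr rfl (fun k _ => by rw [hfd k])]
    rw [← Finset.sum_congr rfl (fun k (_ : k ∈ Finset.range (m - (r+1) + 1)) => rfl)]
    rw [Finset.mul_sum, Finset.mul_sum]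
    rw [← Finset.sum_congr rfl (fun k (_ : k ∈ Finset.range (m - (r+1) + 1)) => rfl)]
    exact Finset.sum_congr rfl (fun k _ => by ring)

lemma fdiff_integral (h : ℝ) (r : ℕ) : ∀ (g : ℝ → ℝ), Continuous g → ∀ (k : ℕ),
    fdiff r (fun j => ∫ t in ((j : ℝ) * h)..((j : ℝ) * h + h), g t) k
      = ∫ t in ((k : ℝ) * h)..((k : ℝ) * h + h), (Dh h)^[r] g t := by
  induction r with
  | zero => intro g _ k; rfl
  | succ r ih =>
    intro g hg k
    show fdiff r (fun j => (∫ t in (((j+1:ℕ) : ℝ) * h)..(((j+1:ℕ) : ℝ) * h + h), g t)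
        - ∫ t in ((j : ℝ) * h)..((j : ℝ) * h + h), g t) k
      = ∫ t in ((k : ℝ) * h)..((k : ℝ) * h + h), (Dh h)^[r+1] g t
    have hstep : ∀ j : ℕ, (∫ t in (((j+1:ℕ) : ℝ) * h)..(((j+1:ℕ) : ℝ) * h + h), g t)
        - (∫ t in ((j : ℝ) * h)..((j : ℝ) * h + h), g t)
        = ∫ t in ((j : ℝ) * h)..((j : ℝ) * h + h), Dh h g t := by
      intro j
      have h1 : (∫ t in ((j : ℝ) * h)..((j : ℝ) * h + h), g (t + h))
          = ∫ t in (((j+1:ℕ) : ℝ) * h)..(((j+1:ℕ) : ℝ) * h + h), g t := by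
        rw [intervalIntegral.integral_comp_add_right]
        congr 1 <;> push_cast <;> ring
      have hc1 : Continuous (fun t : ℝ => g (t + h)) := by fun_prop
      rw [← h1]
      rw [← intervalIntegral.integral_sub (hc1.intervalIntegrable _ _)
        (hg.intervalIntegrable _ _)]
      rfl
    rw [show (fun j => (∫ t in (((j+1:ℕ) : ℝ) * h)..(((j+1:ℕ) : ℝ) * h + h), g t)
        - ∫ t in ((j : ℝ) * h)..((j : ℝ) * h + h), g t)
      = (fun j : ℕ => ∫ t in ((j : ℝ) * h)..((j : ℝ) * h + h), Dh h g t) by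
        funext j; exact hstep j]
    rw [ih (Dh h g) (Dh_continuous hg h) k, Function.iterate_succ_apply]

lemma iteratedDeriv_Dh {f : ℝ → ℝ} (r : ℕ) (hf : ContDiff ℝ r f) (h : ℝ) :
    iteratedDeriv r (Dh h f) = fun s => iteratedDeriv r f (s + h) - iteratedDeriv r f s := by
  induction r generalizing f with
  | zero => rfl
  | succ r ih =>
    rw [iteratedDeriv_succ', iteratedDeriv_succ']
    have hdiff : Differentiable ℝ f :=
      hf.differentiable (by simp)
    have hf' : ContDiff ℝ ((r : WithTop ℕ∞) + 1) f := by exact_mod_cast hf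
    have hd : ContDiff ℝ r (deriv f) := (contDiff_succ_iff_deriv.mp hf').2.2
    have hDh : deriv (Dh h f) = Dh h (deriv f) := by
      funext s
      have h1 : DifferentiableAt ℝ (fun t : ℝ => f (t + h)) s :=
        (hdiff (s + h)).comp s ((differentiable_id.add_const h) s)
      have h2 : deriv (fun t : ℝ => f (t + h)) s = deriv f (s + h) := by
        rw [deriv_comp_add_const]
      show deriv (fun t => f (t + h) - f t) s = deriv f (s + h) - deriv f s
      rw [deriv_fun_sub h1 (hdiff s), h2]
    rw [hDh, ih hd]

lemma iterDh_bound (r : ℕ) : ∀ (f : ℝ → ℝ), ContDiff ℝ r f → ∀ (h : ℝ), 0 ≤ h →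
    ∀ (t mlo M : ℝ),
    (∀ s ∈ Set.Icc t (t + r * h), mlo ≤ iteratedDeriv r f s ∧ iteratedDeriv r f s ≤ M) →
    mlo * h ^ r ≤ (Dh h)^[r] f t ∧ (Dh h)^[r] f t ≤ M * h ^ r := by
  induction r with
  | zero =>
    intro f _ h _ t mlo M hb
    have := hb t (by simp)
    simpa using this
  | succ r ih =>
    intro f hf h hh t mlo M hb
    have hf' : ContDiff ℝ ((r : WithTop ℕ∞) + 1) f := by exact_mod_cast hf
    have hdiff : Differentiable ℝ f :=
      hf.differentiable (by simp)
    have hfr : ContDiff ℝ r f := hf.of_le (by exact_mod_cast Nat.le_succ r)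
    have hdR : Differentiable ℝ (iteratedDeriv r f) :=
      hf'.differentiable_iteratedDeriv r (by exact_mod_cast Nat.lt_succ_self r)
    have hcR : Continuous (iteratedDeriv (r + 1) f) :=
      hf.continuous_iteratedDeriv (r + 1) (le_refl _)
    -- representation of the r-th iterated derivative of Dh h f
    have hrep : ∀ s : ℝ, iteratedDeriv r (Dh h f) s
        = ∫ u in s..(s + h), iteratedDeriv (r + 1) f u := by
      intro s
      rw [iteratedDeriv_Dh r hfr h]
      have hftc : ∫ u in s..(s + h), deriv (iteratedDeriv r f) u
          = iteratedDeriv r f (s + h) - iteratedDeriv r f s := by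
        apply intervalIntegral.integral_deriv_eq_sub
        · intro x _; exact hdR x
        · rw [← iteratedDeriv_succ]
          exact hcR.intervalIntegrable _ _
      rw [← iteratedDeriv_succ] at hftc
      exact hftc.symm
    -- bounds for iteratedDeriv r (Dh h f) on [t, t + r h]
    have hDhC : ContDiff ℝ r (Dh h f) := by
      have h1 : ContDiff ℝ ((r : WithTop ℕ∞) + 1) (fun s : ℝ => f (s + h)) :=
        hf'.comp (contDiff_id.add contDiff_const)
      exact ((h1.sub hf').of_le (by
        exact_mod_cast (le_self_add : (r : WithTop ℕ∞) ≤ r + 1)))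
    have hbnd : ∀ s ∈ Set.Icc t (t + r * h),
        mlo * h ≤ iteratedDeriv r (Dh h f) s ∧ iteratedDeriv r (Dh h f) s ≤ M * h := by
      intro s hs
      obtain ⟨hs1, hs2⟩ := hs
      have hsub : Set.Icc s (s + h) ⊆ Set.Icc t (t + (r + 1 : ℕ) * h) := by
        intro u hu
        obtain ⟨hu1, hu2⟩ := hu
        constructor
        · linarith
        · push_cast
          nlinarith [hh]
      rw [hrep s]
      have hlow : mlo * h = ∫ _ in s..(s + h), mlo := by
        rw [intervalIntegral.integral_const]; simp [mul_comm]
      have hhigh : M * h = ∫ _ in s..(s + h), M := by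
        rw [intervalIntegral.integral_const]; simp [mul_comm]
      constructor
      · rw [hlow]
        apply intervalIntegral.integral_mono_on (by linarith)
          ((continuous_const.intervalIntegrable _ _)) (hcR.intervalIntegrable _ _)
        intro u hu
        exact (hb u (hsub hu)).1
      · rw [hhigh]
        apply intervalIntegral.integral_mono_on (by linarith)
          (hcR.intervalIntegrable _ _) ((continuous_const.intervalIntegrable _ _))
        intro u hu
        exact (hb u (hsub hu)).2
    have := ih (Dh h f) hDhC h hh t (mlo * h) (M * h) hbnd
    rw [← Function.iterate_succ_apply] at this
    constructor
    · calc mlo * h ^ (r + 1) = (mlo * h) * h ^ r := by ring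
        _ ≤ _ := this.1
    · calc (Dh h)^[r + 1] f t ≤ (M * h) * h ^ r := this.2
        _ = M * h ^ (r + 1) := by ring
set_option maxHeartbeats 1000000 in
theorem kantorovich_derivative_difference
    (n r : ℕ) (hn : 1 ≤ n) (hr : r ≤ n) (f : ℝ → ℝ) (hf : ContDiff ℝ r f) :
    ∀ x ∈ Set.Icc (0:ℝ) 1,
      |iteratedDeriv r (kantorovichOp n f) x - kantorovichOp (n - r) (iteratedDeriv r f) x| ≤
        (r : ℝ) * ((r : ℝ) + 1) / (2 * ((n : ℝ) + 1)) * supNorm (iteratedDeriv r f)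
          + modCont (iteratedDeriv r f) (((r : ℝ) + 1) / ((n : ℝ) + 1)) := by
  intro x hx
  set g : ℝ → ℝ := iteratedDeriv r f with hgdef
  have hg : Continuous g := hf.continuous_iteratedDeriv r le_rfl
  have hn1 : (0:ℝ) < (n:ℝ) + 1 := by positivity
  set h : ℝ := 1 / ((n:ℝ) + 1) with hdef
  have hh : 0 < h := by rw [hdef]; positivity
  have hnh : ((n:ℝ) + 1) * h = 1 := by rw [hdef]; field_simp
  set m : ℕ := n - r with hmdef
  have hmn : m ≤ n := Nat.sub_le n r
  have hmr : (m : ℝ) = (n : ℝ) - r := by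
    rw [hmdef, Nat.cast_sub hr]
  have hm1 : (0:ℝ) < (m:ℝ) + 1 := by positivity
  set δ : ℝ := ((r:ℝ) + 1) / ((n:ℝ) + 1) with hδdef
  have hδ0 : 0 ≤ δ := by rw [hδdef]; positivity
  set A : ℝ := (r : ℝ) * ((r : ℝ) + 1) / (2 * ((n : ℝ) + 1)) with hAdef
  have hA0 : 0 ≤ A := by rw [hAdef]; positivity
  set N : ℝ := supNorm g with hNdef
  set ω : ℝ := modCont g δ with hωdef
  -- sup norm and modulus of continuity facts
  obtain ⟨z, hz, hzmax⟩ := isCompact_Icc.exists_isMaxOn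
    (⟨0, by norm_num⟩ : Set.Nonempty (Set.Icc (0:ℝ) 1)) (hg.abs.continuousOn)
  have hC : ∀ y ∈ Set.Icc (0:ℝ) 1, |g y| ≤ |g z| := fun y hy => hzmax hy
  have hBdd : BddAbove (Set.range fun p : Set.Icc (0:ℝ) 1 => |g p|) := by
    refine ⟨|g z|, ?_⟩; rintro _ ⟨y, rfl⟩; exact hC y y.2
  have habs_le : ∀ u ∈ Set.Icc (0:ℝ) 1, |g u| ≤ N := by
    intro u hu
    rw [hNdef, supNorm]
    exact le_ciSup hBdd (⟨u, hu⟩ : Set.Icc (0:ℝ) 1)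
  have hN0 : 0 ≤ N := le_trans (abs_nonneg _) (habs_le 0 (by norm_num))
  have hSbdd : BddAbove {d : ℝ | ∃ a ∈ Set.Icc (0:ℝ) 1, ∃ b ∈ Set.Icc (0:ℝ) 1,
      |a - b| ≤ δ ∧ d = |g a - g b|} := by
    refine ⟨2 * |g z|, ?_⟩
    rintro d ⟨a, ha, b, hb, _, rfl⟩
    have h1 := hC a ha
    have h2 := hC b hb
    calc |g a - g b| ≤ |g a| + |g b| := abs_sub _ _
      _ ≤ 2 * |g z| := by linarith
  have hω : ∀ a ∈ Set.Icc (0:ℝ) 1, ∀ b ∈ Set.Icc (0:ℝ) 1, |a - b| ≤ δ →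
      |g a - g b| ≤ ω := by
    intro a ha b hb hab
    rw [hωdef, modCont]
    exact le_csSup hSbdd ⟨a, ha, b, hb, hab, rfl⟩
  have hω0 : 0 ≤ ω := by
    have := hω 0 (by norm_num) 0 (by norm_num) (by simpa using hδ0)
    simpa using le_trans (abs_nonneg _) this
  -- rewrite K_n f as a Bernstein sum
  set c : ℕ → ℝ := fun k => ((n:ℝ) + 1) * ∫ t in ((k:ℝ) * h)..((k:ℝ) * h + h), f t with hcdef
  have hK : kantorovichOp n f = fun y => ∑ k ∈ Finset.range (n + 1), c k * bern n k y := by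
    funext y
    rw [kantorovichOp, Finset.mul_sum, hcdef]
    refine Finset.sum_congr rfl (fun k _ => ?_)
    have e1 : (k:ℝ) / ((n:ℝ) + 1) = (k:ℝ) * h := by rw [hdef]; ring
    have e2 : ((k:ℝ) + 1) / ((n:ℝ) + 1) = (k:ℝ) * h + h := by rw [hdef]; ring
    rw [e1, e2]
    ring
  have hIter : iteratedDeriv r (kantorovichOp n f) x
      = (∏ i ∈ Finset.range r, ((n - i : ℕ) : ℝ)) *
          ∑ k ∈ Finset.range (m + 1), fdiff r c k * bern m k x := by
    rw [hK, hmdef]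
    exact congrFun (iteratedDeriv_bern_sum r n hr c) x
  set P : ℝ := ∏ i ∈ Finset.range r, ((n - i : ℕ) : ℝ) with hPdef
  have hP0 : 0 ≤ P := by
    rw [hPdef]
    exact Finset.prod_nonneg (fun i _ => by positivity)
  have hfd : ∀ k, fdiff r c k
      = ((n:ℝ) + 1) * ∫ t in ((k:ℝ) * h)..((k:ℝ) * h + h), (Dh h)^[r] f t := by
    intro k
    rw [hcdef, fdiff_const_mul r (fun j => ∫ t in ((j:ℝ) * h)..((j:ℝ) * h + h), f t)
      ((n:ℝ) + 1) k, fdiff_integral h r f hf.continuous k]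
  have hKm : kantorovichOp m g x = ∑ k ∈ Finset.range (m + 1),
      (((m:ℝ) + 1) * ∫ t in ((k:ℝ) / ((m:ℝ) + 1))..(((k:ℝ) + 1) / ((m:ℝ) + 1)), g t)
        * bern m k x := by
    rw [kantorovichOp, Finset.mul_sum]
    exact Finset.sum_congr rfl (fun k _ => by ring)
  -- the product coefficient
  set cP : ℝ := P * h ^ r with hcPdef
  have hcP_prod : cP = ∏ i ∈ Finset.range r, (1 - ((i:ℝ) + 1) * h) := by
    rw [hcPdef, hPdef, show h ^ r = ∏ _i ∈ Finset.range r, h by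
      rw [Finset.prod_const, Finset.card_range], ← Finset.prod_mul_distrib]
    refine Finset.prod_congr rfl (fun i hi => ?_)
    have hin : i ≤ n := le_trans (le_of_lt (Finset.mem_range.mp hi)) hr
    rw [Nat.cast_sub hin]
    linear_combination hnh
  have hfac : ∀ i ∈ Finset.range r, 0 ≤ ((i:ℝ) + 1) * h ∧ ((i:ℝ) + 1) * h ≤ 1 := by
    intro i hi
    have hin : (i:ℝ) + 1 ≤ (n:ℝ) + 1 := by
      have : i < r := Finset.mem_range.mp hi
      have : (i:ℝ) < r := by exact_mod_cast this
      have : (r:ℝ) ≤ n := by exact_mod_cast hr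
      push_cast
      linarith
    constructor
    · positivity
    · calc ((i:ℝ) + 1) * h ≤ ((n:ℝ) + 1) * h :=
          mul_le_mul_of_nonneg_right hin (le_of_lt hh)
        _ = 1 := hnh
  have hcP1 : cP ≤ 1 := by
    rw [hcP_prod]
    exact Finset.prod_le_one (fun i hi => by linarith [(hfac i hi).2])
      (fun i hi => by linarith [(hfac i hi).1])
  have hcP0 : 0 ≤ cP := mul_nonneg hP0 (by positivity)
  have hAcP : 1 - cP ≤ A := by
    have hW := one_sub_sum_le_prod r (fun i => ((i:ℝ) + 1) * h) hfac
    rw [← hcP_prod] at hW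
    have hsum : ∑ i ∈ Finset.range r, ((i:ℝ) + 1) * h = A := by
      rw [← Finset.sum_mul, gauss_sum r, hAdef, hdef]
      field_simp
    rw [hsum] at hW
    linarith
  -- the per-index bound
  have key : ∀ k ∈ Finset.range (m + 1),
      |P * fdiff r c k -
        (((m:ℝ) + 1) * ∫ t in ((k:ℝ) / ((m:ℝ) + 1))..(((k:ℝ) + 1) / ((m:ℝ) + 1)), g t)|
      ≤ A * N + ω := by
    intro k hk
    have hkm : k ≤ m := Nat.lt_succ_iff.mp (Finset.mem_range.mp hk)
    have hkmR : (k : ℝ) ≤ (m : ℝ) := by exact_mod_cast hkm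
    have hk0 : (0:ℝ) ≤ (k:ℝ) := Nat.cast_nonneg k
    have hr0 : (0:ℝ) ≤ (r:ℝ) := Nat.cast_nonneg r
    -- the enclosing interval I
    have hI1 : (0:ℝ) ≤ (k:ℝ) * h := by positivity
    have hIlen : (k:ℝ) * h + ((r:ℝ) + 1) * h ≤ 1 := by
      have h1 : ((k:ℝ) + (r:ℝ) + 1) * h ≤ ((n:ℝ) + 1) * h := by
        apply mul_le_mul_of_nonneg_right _ (le_of_lt hh)
        have : (k:ℝ) ≤ (n:ℝ) - (r:ℝ) := by rw [← hmr]; exact hkmR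
        linarith
      rw [hnh] at h1
      calc (k:ℝ) * h + ((r:ℝ) + 1) * h = ((k:ℝ) + (r:ℝ) + 1) * h := by ring
        _ ≤ 1 := h1
    have hIne : (k:ℝ) * h ≤ (k:ℝ) * h + ((r:ℝ) + 1) * h := by
      have : 0 ≤ ((r:ℝ) + 1) * h := by positivity
      linarith
    obtain ⟨u, hu, humin⟩ := isCompact_Icc.exists_isMinOn
      (Set.nonempty_Icc.mpr hIne) hg.continuousOn
    obtain ⟨v, hv, hvmax⟩ := isCompact_Icc.exists_isMaxOn
      (Set.nonempty_Icc.mpr hIne) hg.continuousOn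
    have hIsub : Set.Icc ((k:ℝ)*h) ((k:ℝ)*h + ((r:ℝ)+1)*h) ⊆ Set.Icc (0:ℝ) 1 :=
      fun y hy => ⟨le_trans hI1 hy.1, le_trans hy.2 hIlen⟩
    have huI : u ∈ Set.Icc (0:ℝ) 1 := hIsub hu
    have hvI : v ∈ Set.Icc (0:ℝ) 1 := hIsub hv
    have hmloM : g u ≤ g v := le_trans (humin hv) (le_refl _)
    -- bounds on the iterated difference
    have hDb : ∀ t ∈ Set.Icc ((k:ℝ)*h) ((k:ℝ)*h + h),
        g u * h ^ r ≤ (Dh h)^[r] f t ∧ (Dh h)^[r] f t ≤ g v * h ^ r := by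
      intro t ht
      apply iterDh_bound r f hf h (le_of_lt hh) t (g u) (g v)
      intro s hs
      have hsI : s ∈ Set.Icc ((k:ℝ)*h) ((k:ℝ)*h + ((r:ℝ)+1)*h) := by
        constructor
        · linarith [ht.1, hs.1]
        · have h2 := hs.2
          have h3 := ht.2
          have hhr : 0 ≤ (r:ℝ) * h := by positivity
          linarith
      exact ⟨humin hsI, hvmax hsI⟩
    have hIcont : Continuous ((Dh h)^[r] f) := iterDh_continuous hf.continuous h r
    have hkk : (k:ℝ) * h ≤ (k:ℝ) * h + h := by linarith
    have hInt1 : g u * h ^ r * h ≤ ∫ t in ((k:ℝ)*h)..((k:ℝ)*h + h), (Dh h)^[r] f t := by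
      have h1 := intervalIntegral.integral_mono_on (μ := MeasureTheory.volume) hkk (continuous_const.intervalIntegrable _ _)
        (hIcont.intervalIntegrable _ _) (fun t ht => (hDb t ht).1)
      rw [intervalIntegral.integral_const, smul_eq_mul] at h1
      calc g u * h ^ r * h = ((k:ℝ)*h + h - (k:ℝ)*h) * (g u * h ^ r) := by ring
        _ ≤ _ := h1
    have hInt2 : (∫ t in ((k:ℝ)*h)..((k:ℝ)*h + h), (Dh h)^[r] f t) ≤ g v * h ^ r * h := by
      have h1 := intervalIntegral.integral_mono_on (μ := MeasureTheory.volume) hkk (hIcont.intervalIntegrable _ _)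
        (continuous_const.intervalIntegrable _ _) (fun t ht => (hDb t ht).2)
      rw [intervalIntegral.integral_const, smul_eq_mul] at h1
      calc (∫ t in ((k:ℝ)*h)..((k:ℝ)*h + h), (Dh h)^[r] f t)
          ≤ ((k:ℝ)*h + h - (k:ℝ)*h) * (g v * h ^ r) := h1
        _ = g v * h ^ r * h := by ring
    -- bounds on T1
    have hPn0 : 0 ≤ P * ((n:ℝ) + 1) := mul_nonneg hP0 (by positivity)
    have hT1low : cP * g u ≤ P * fdiff r c k := by
      rw [hfd k]
      have h1 : P * ((n:ℝ)+1) * (g u * h ^ r * h)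
          ≤ P * ((n:ℝ)+1) * ∫ t in ((k:ℝ)*h)..((k:ℝ)*h + h), (Dh h)^[r] f t :=
        mul_le_mul_of_nonneg_left hInt1 hPn0
      have h2 : cP * g u = P * ((n:ℝ)+1) * (g u * h ^ r * h) := by
        rw [hcPdef]
        linear_combination (-(P * h ^ r * g u)) * hnh
      rw [h2]
      calc P * ((n:ℝ)+1) * (g u * h ^ r * h) ≤ _ := h1
        _ = P * (((n:ℝ)+1) * ∫ t in ((k:ℝ)*h)..((k:ℝ)*h + h), (Dh h)^[r] f t) := by ring
    have hT1high : P * fdiff r c k ≤ cP * g v := by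
      rw [hfd k]
      have h1 : P * ((n:ℝ)+1) * (∫ t in ((k:ℝ)*h)..((k:ℝ)*h + h), (Dh h)^[r] f t)
          ≤ P * ((n:ℝ)+1) * (g v * h ^ r * h) := mul_le_mul_of_nonneg_left hInt2 hPn0
      have h2 : cP * g v = P * ((n:ℝ)+1) * (g v * h ^ r * h) := by
        rw [hcPdef]
        linear_combination (-(P * h ^ r * g v)) * hnh
      rw [h2]
      calc P * (((n:ℝ)+1) * ∫ t in ((k:ℝ)*h)..((k:ℝ)*h + h), (Dh h)^[r] f t)
          = P * ((n:ℝ)+1) * (∫ t in ((k:ℝ)*h)..((k:ℝ)*h + h), (Dh h)^[r] f t) := by ring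
        _ ≤ _ := h1
    -- bounds on T2
    have hJlo : (k:ℝ) * h ≤ (k:ℝ) / ((m:ℝ) + 1) := by
      have hhm : h ≤ 1 / ((m:ℝ) + 1) := by
        rw [hdef]
        apply one_div_le_one_div_of_le hm1
        have : (m:ℝ) ≤ (n:ℝ) := by exact_mod_cast hmn
        linarith
      calc (k:ℝ) * h ≤ (k:ℝ) * (1 / ((m:ℝ) + 1)) := mul_le_mul_of_nonneg_left hhm hk0
        _ = (k:ℝ) / ((m:ℝ) + 1) := by ring
    have hJhi : ((k:ℝ) + 1) / ((m:ℝ) + 1) ≤ (k:ℝ) * h + ((r:ℝ) + 1) * h := by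
      have e1 : (k:ℝ) * h + ((r:ℝ) + 1) * h = ((k:ℝ) + (r:ℝ) + 1) / ((n:ℝ) + 1) := by
        rw [hdef]; ring
      rw [e1, div_le_div_iff₀ hm1 hn1]
      have hkn : (k:ℝ) ≤ (n:ℝ) - (r:ℝ) := by rw [← hmr]; exact hkmR
      have hprod : 0 ≤ (r:ℝ) * ((n:ℝ) - (r:ℝ) - (k:ℝ)) :=
        mul_nonneg hr0 (by linarith)
      rw [hmr]
      nlinarith [hprod]
    have hJne : (k:ℝ) / ((m:ℝ) + 1) ≤ ((k:ℝ) + 1) / ((m:ℝ) + 1) :=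
      (div_le_div_iff_of_pos_right hm1).mpr (by linarith)
    have hJsub : Set.Icc ((k:ℝ)/((m:ℝ)+1)) (((k:ℝ)+1)/((m:ℝ)+1))
        ⊆ Set.Icc ((k:ℝ)*h) ((k:ℝ)*h + ((r:ℝ)+1)*h) :=
      fun y hy => ⟨le_trans hJlo hy.1, le_trans hy.2 hJhi⟩
    have hJlen : ((k:ℝ) + 1) / ((m:ℝ) + 1) - (k:ℝ) / ((m:ℝ) + 1) = 1 / ((m:ℝ) + 1) := by
      ring
    have hT2low : g u ≤ ((m:ℝ) + 1) * ∫ t in ((k:ℝ)/((m:ℝ)+1))..(((k:ℝ)+1)/((m:ℝ)+1)), g t := by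
      have h1 := intervalIntegral.integral_mono_on (μ := MeasureTheory.volume) hJne (continuous_const.intervalIntegrable _ _)
        (hg.intervalIntegrable _ _) (fun t ht => humin (hJsub ht))
      rw [intervalIntegral.integral_const, smul_eq_mul, hJlen] at h1
      have h2 : ((m:ℝ) + 1) * (1 / ((m:ℝ) + 1) * g u)
          ≤ ((m:ℝ) + 1) * ∫ t in ((k:ℝ)/((m:ℝ)+1))..(((k:ℝ)+1)/((m:ℝ)+1)), g t :=
        mul_le_mul_of_nonneg_left h1 (le_of_lt hm1)
      calc g u = ((m:ℝ) + 1) * (1 / ((m:ℝ) + 1) * g u) := by field_simp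
        _ ≤ _ := h2
    have hT2high : ((m:ℝ) + 1) * (∫ t in ((k:ℝ)/((m:ℝ)+1))..(((k:ℝ)+1)/((m:ℝ)+1)), g t)
        ≤ g v := by
      have h1 := intervalIntegral.integral_mono_on (μ := MeasureTheory.volume) hJne (hg.intervalIntegrable _ _)
        (continuous_const.intervalIntegrable _ _) (fun t ht => hvmax (hJsub ht))
      rw [intervalIntegral.integral_const, smul_eq_mul, hJlen] at h1
      have h2 : ((m:ℝ) + 1) * (∫ t in ((k:ℝ)/((m:ℝ)+1))..(((k:ℝ)+1)/((m:ℝ)+1)), g t)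
          ≤ ((m:ℝ) + 1) * (1 / ((m:ℝ) + 1) * g v) :=
        mul_le_mul_of_nonneg_left h1 (le_of_lt hm1)
      calc ((m:ℝ) + 1) * (∫ t in ((k:ℝ)/((m:ℝ)+1))..(((k:ℝ)+1)/((m:ℝ)+1)), g t) ≤ _ := h2
        _ = g v := by field_simp
    set T1 : ℝ := P * fdiff r c k with hT1def
    set T2 : ℝ := ((m:ℝ) + 1) * ∫ t in ((k:ℝ)/((m:ℝ)+1))..(((k:ℝ)+1)/((m:ℝ)+1)), g t with hT2def
    clear_value T1 T2
    -- modulus bound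
    have huv : |g v - g u| ≤ ω := by
      apply hω v hvI u huI
      have h1 := hu.1
      have h2 := hu.2
      have h3 := hv.1
      have h4 := hv.2
      have hδeq : ((r:ℝ) + 1) * h = δ := by rw [hδdef, hdef]; ring
      rw [abs_sub_le_iff]
      constructor <;> linarith [hδeq]
    have hMm : g v - g u ≤ ω := le_trans (le_abs_self _) huv
    -- norm bound on T2
    have hT2abs : |T2| ≤ N := by
      have h1 := habs_le u huI
      have h2 := habs_le v hvI
      rw [abs_le] at h1 h2 ⊢
      constructor <;> linarith [hT2low, hT2high]
    -- combine
    have hstep1 : |T1 - cP * T2| ≤ g v - g u := by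
      have h1 : cP * g u ≤ cP * T2 := mul_le_mul_of_nonneg_left hT2low hcP0
      have h2 : cP * T2 ≤ cP * g v := mul_le_mul_of_nonneg_left hT2high hcP0
      have hq : 0 ≤ (1 - cP) * (g v - g u) :=
        mul_nonneg (by linarith) (by linarith)
      rw [abs_sub_le_iff]
      constructor
      · linarith
      · linarith
    have hstep2 : |cP * T2 - T2| ≤ A * N := by
      have h1 : |cP * T2 - T2| = (1 - cP) * |T2| := by
        rw [show cP * T2 - T2 = (cP - 1) * T2 by ring, abs_mul,
          abs_of_nonpos (by linarith : cP - 1 ≤ 0)]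
        ring
      rw [h1]
      exact mul_le_mul hAcP hT2abs (abs_nonneg _) hA0
    calc |T1 - T2| ≤ |T1 - cP * T2| + |cP * T2 - T2| := abs_sub_le T1 (cP * T2) T2
      _ ≤ (g v - g u) + A * N := add_le_add hstep1 hstep2
      _ ≤ A * N + ω := by linarith
  -- assemble
  rw [hIter, hKm, Finset.mul_sum, ← Finset.sum_sub_distrib]
  refine le_trans (Finset.abs_sum_le_sum_abs _ _) ?_
  calc ∑ k ∈ Finset.range (m + 1),
        |P * (fdiff r c k * bern m k x) -
          (((m:ℝ) + 1) * ∫ t in ((k:ℝ)/((m:ℝ)+1))..(((k:ℝ)+1)/((m:ℝ)+1)), g t) * bern m k x|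
      = ∑ k ∈ Finset.range (m + 1),
        |P * fdiff r c k -
          (((m:ℝ) + 1) * ∫ t in ((k:ℝ)/((m:ℝ)+1))..(((k:ℝ)+1)/((m:ℝ)+1)), g t)| * bern m k x := by
        refine Finset.sum_congr rfl (fun k _ => ?_)
        rw [show P * (fdiff r c k * bern m k x) -
            (((m:ℝ) + 1) * ∫ t in ((k:ℝ)/((m:ℝ)+1))..(((k:ℝ)+1)/((m:ℝ)+1)), g t) * bern m k x
          = (P * fdiff r c k -
            (((m:ℝ) + 1) * ∫ t in ((k:ℝ)/((m:ℝ)+1))..(((k:ℝ)+1)/((m:ℝ)+1)), g t)) * bern m k x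
          by ring, abs_mul, abs_of_nonneg (bern_nonneg hx)]
    _ ≤ ∑ k ∈ Finset.range (m + 1), (A * N + ω) * bern m k x :=
        Finset.sum_le_sum (fun k hk =>
          mul_le_mul_of_nonneg_right (key k hk) (bern_nonneg hx))
    _ = (A * N + ω) * ∑ k ∈ Finset.range (m + 1), bern m k x := by rw [Finset.mul_sum]
    _ = A * N + ω := by rw [bern_sum m x, mul_one]
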